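/- Let ∂_λ be an even derivation of A commuting as an operator with D±, D_{x±} and D_{θ±}, let β ∈ A₀ be central with D±β = D_{x±}β = D_{θ±}β = 0, and let Ψ ∈ A₀ be invertible with D±Ψ = U±Ψ, D_{x±}Ψ = V±Ψ, D_{θ±}Ψ = W±Ψ. Then the Sym–Tafel-type immersion function F := β Ψ⁻¹(∂_λΨ) satisfies D±F = Ψ⁻¹(β ∂_λU±)Ψ, D_{x±}F = Ψ⁻¹(β ∂_λV±)Ψ, and D_{θ±}F = Ψ⁻¹(β ∂_λW±)Ψ, where ∂_λU± is determined by ∂_λ(U±Ψ) = (∂_λU±)Ψ + U±(∂_λΨ) and similarly for V±, W±. -/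

import Mathlib

/-- An even derivation of a ℤ/2-graded associative unital ℂ-algebra `A` with grading `𝒜`:
a ℂ-linear map preserving the parity of homogeneous elements and satisfying the Leibniz
rule `∂(ab) = (∂a)b + a(∂b)`. -/
def IsEvenDerivation {A : Type*} [Ring A] [Algebra ℂ A]
    (𝒜 : ZMod 2 → Submodule ℂ A) (d : A →ₗ[ℂ] A) : Prop :=
  (∀ i : ZMod 2, ∀ a ∈ 𝒜 i, d a ∈ 𝒜 i) ∧
  ∀ a b : A, d (a * b) = d a * b + a * d b

/-- An odd derivation of a ℤ/2-graded associative unital ℂ-algebra `A` with grading `𝒜`: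
a ℂ-linear map shifting parity by one and satisfying the graded Leibniz rule
`D(ab) = (Da)b + (-1)^i a (Db)` for homogeneous `a` of parity `i`. -/
def IsOddDerivation {A : Type*} [Ring A] [Algebra ℂ A]
    (𝒜 : ZMod 2 → Submodule ℂ A) (d : A →ₗ[ℂ] A) : Prop :=
  (∀ i : ZMod 2, ∀ a ∈ 𝒜 i, d a ∈ 𝒜 (i + 1)) ∧
  ∀ i : ZMod 2, ∀ a ∈ 𝒜 i, ∀ b : A, d (a * b) = d a * b + ((-1 : ℂ) ^ i.val) • (a * d b)

/-- `θ` supercommutes with every homogeneous element: `θ a = (-1)^i a θ` for `a` of parity `i`. -/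
def Supercommutes {A : Type*} [Ring A] [Algebra ℂ A]
    (𝒜 : ZMod 2 → Submodule ℂ A) (θ : A) : Prop :=
  ∀ i : ZMod 2, ∀ a ∈ 𝒜 i, θ * a = ((-1 : ℂ) ^ i.val) • (a * θ)


section AuxSymTafel
variable {A : Type*} [Ring A] [Algebra ℂ A]

private lemma aux_inv_mem_zero (𝒜 : ZMod 2 → Submodule ℂ A) [GradedAlgebra 𝒜]
    {Ψ Ψi : A} (hΨ0 : Ψ ∈ 𝒜 0) (hΨΨi : Ψ * Ψi = 1) (hΨiΨ : Ψi * Ψ = 1) :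
    Ψi ∈ 𝒜 0 := by
  classical
  set c0 : A := (DirectSum.decompose 𝒜 Ψi 0 : A) with hc0def
  set c1 : A := (DirectSum.decompose 𝒜 Ψi 1 : A) with hc1def
  have hc0 : c0 ∈ 𝒜 0 := (DirectSum.decompose 𝒜 Ψi 0).2
  have hc1 : c1 ∈ 𝒜 1 := (DirectSum.decompose 𝒜 Ψi 1).2
  have huniv : Ψi = c0 + c1 := by
    conv_lhs => rw [← DirectSum.sum_support_decompose 𝒜 Ψi]
    have hsub : ∑ i ∈ (DirectSum.decompose 𝒜 Ψi).support,
        (DirectSum.decompose 𝒜 Ψi i : A) = ∑ i : ZMod 2, (DirectSum.decompose 𝒜 Ψi i : A) :=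
      Finset.sum_subset (Finset.subset_univ _) (fun i _ hi => by
        rw [DFinsupp.notMem_support_iff.mp hi]; rfl)
    rw [hsub]
    have : (Finset.univ : Finset (ZMod 2)) = {0, 1} := by decide
    rw [this, Finset.sum_insert (by decide), Finset.sum_singleton]
  have hmem0 : c0 * Ψ ∈ 𝒜 0 := by simpa using SetLike.mul_mem_graded hc0 hΨ0
  have hmem1 : c1 * Ψ ∈ 𝒜 1 := by simpa using SetLike.mul_mem_graded hc1 hΨ0
  have hsum1 : c0 * Ψ + c1 * Ψ = 1 := by rw [← add_mul, ← huniv, hΨiΨ]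
  have h1 : c1 * Ψ = 0 := by
    have := congrArg (fun x => (DirectSum.decompose 𝒜 x 1 : A)) hsum1
    simp only [DirectSum.decompose_add] at this
    rw [DirectSum.add_apply, Submodule.coe_add,
      DirectSum.decompose_of_mem_ne 𝒜 hmem0 (by decide),
      DirectSum.decompose_of_mem_same 𝒜 hmem1,
      DirectSum.decompose_of_mem_ne 𝒜 (SetLike.one_mem_graded 𝒜) (by decide)] at this
    simpa using this
  have hc1z : c1 = 0 := by
    have : c1 * (Ψ * Ψi) = 0 := by rw [← mul_assoc, h1, zero_mul]
    rwa [hΨΨi, mul_one] at this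
  rw [huniv, hc1z, add_zero]; exact hc0

private lemma aux_Dinv_eq (D : A →ₗ[ℂ] A) (Ψ Ψi U : A)
    (hΨΨi : Ψ * Ψi = 1) (hΨD : D Ψ = U * Ψ)
    (hzero : D Ψi * Ψ + Ψi * D Ψ = 0) :
    D Ψi = -(Ψi * U) := by
  have h : D Ψi * Ψ = -(Ψi * (U * Ψ)) := by
    rw [← hΨD]; exact eq_neg_of_add_eq_zero_left hzero
  calc D Ψi = D Ψi * Ψ * Ψi := by rw [mul_assoc, hΨΨi, mul_one]
    _ = -(Ψi * (U * Ψ)) * Ψi := by rw [h]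
    _ = -((Ψi * U) * (Ψ * Ψi)) := by noncomm_ring
    _ = -(Ψi * U) := by rw [hΨΨi, mul_one]

private lemma aux_core_F (dl D : A →ₗ[ℂ] A) (β Ψ Ψi U : A)
    (hβc : ∀ a : A, β * a = a * β)
    (hdl : ∀ a b : A, dl (a * b) = dl a * b + a * dl b)
    (hDβ : ∀ x, D (β * x) = β * D x)
    (hDΨi : ∀ x, D (Ψi * x) = D Ψi * x + Ψi * D x)
    (hΨΨi : Ψ * Ψi = 1)
    (hcomm : dl (D Ψ) = D (dl Ψ))
    (hΨD : D Ψ = U * Ψ)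
    (hzero : D Ψi * Ψ + Ψi * D Ψ = 0) :
    D (β * (Ψi * dl Ψ)) = Ψi * (β * dl U) * Ψ := by
  have hΨiD : D Ψi = -(Ψi * U) := aux_Dinv_eq D Ψ Ψi U hΨΨi hΨD hzero
  have hDdl : D (dl Ψ) = dl U * Ψ + U * dl Ψ := by
    rw [← hcomm, hΨD, hdl]
  rw [hDβ, hDΨi, hΨiD, hDdl]
  have : β * (-(Ψi * U) * dl Ψ + Ψi * (dl U * Ψ + U * dl Ψ)) = β * (Ψi * (dl U * Ψ)) := by
    noncomm_ring
  rw [this, ← mul_assoc, hβc Ψi, mul_assoc, mul_assoc, ← mul_assoc β, ← mul_assoc Ψi]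

private lemma aux_odd_F (𝒜 : ZMod 2 → Submodule ℂ A) [GradedAlgebra 𝒜]
    (dl D : A →ₗ[ℂ] A) (β Ψ Ψi U : A)
    (hD : IsOddDerivation 𝒜 D)
    (hβ0 : β ∈ 𝒜 0) (hβc : ∀ a : A, β * a = a * β) (hDβ : D β = 0)
    (hΨi0 : Ψi ∈ 𝒜 0) (hΨΨi : Ψ * Ψi = 1) (hΨiΨ : Ψi * Ψ = 1)
    (hdl : ∀ a b : A, dl (a * b) = dl a * b + a * dl b)
    (hcomm : dl (D Ψ) = D (dl Ψ)) (hΨD : D Ψ = U * Ψ) :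
    D (β * (Ψi * dl Ψ)) = Ψi * (β * dl U) * Ψ := by
  have lβ : ∀ x, D (β * x) = β * D x := fun x => by
    simpa [hDβ] using hD.2 0 β hβ0 x
  have lΨi : ∀ x, D (Ψi * x) = D Ψi * x + Ψi * D x := fun x => by
    simpa using hD.2 0 Ψi hΨi0 x
  have hone : D (1 : A) = 0 := by
    have h11 := hD.2 0 1 (SetLike.one_mem_graded 𝒜) 1
    simp only [one_mul, mul_one, ZMod.val_zero, pow_zero, one_smul] at h11
    exact (left_eq_add.mp h11)
  have hzero : D Ψi * Ψ + Ψi * D Ψ = 0 := by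
    have := lΨi Ψ
    rw [hΨiΨ, hone] at this
    exact this.symm
  exact aux_core_F dl D β Ψ Ψi U hβc hdl lβ lΨi hΨΨi hcomm hΨD hzero

private lemma aux_even_F (𝒜 : ZMod 2 → Submodule ℂ A)
    (dl D : A →ₗ[ℂ] A) (β Ψ Ψi U : A)
    (hD : IsEvenDerivation 𝒜 D)
    (hβc : ∀ a : A, β * a = a * β) (hDβ : D β = 0)
    (hΨΨi : Ψ * Ψi = 1) (hΨiΨ : Ψi * Ψ = 1)
    (hdl : ∀ a b : A, dl (a * b) = dl a * b + a * dl b)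
    (hcomm : dl (D Ψ) = D (dl Ψ)) (hΨD : D Ψ = U * Ψ) :
    D (β * (Ψi * dl Ψ)) = Ψi * (β * dl U) * Ψ := by
  have lβ : ∀ x, D (β * x) = β * D x := fun x => by
    simpa [hDβ] using hD.2 β x
  have hone : D (1 : A) = 0 := by
    have h11 := hD.2 1 1
    simp only [one_mul, mul_one] at h11
    exact (left_eq_add.mp h11)
  have hzero : D Ψi * Ψ + Ψi * D Ψ = 0 := by
    have := hD.2 Ψi Ψ
    rw [hΨiΨ, hone] at this
    exact this.symm
  exact aux_core_F dl D β Ψ Ψi U hβc hdl lβ (fun x => hD.2 Ψi x) hΨΨi hcomm hΨD hzero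

end AuxSymTafel

/-- Bosonic Sym–Tafel-type immersion: if `∂_λ` is an even derivation
commuting with all six derivations, `β ∈ A₀` is central with vanishing derivatives, and
`Ψ ∈ A₀` is invertible and satisfies the three linear spectral problems, then
`F := β Ψ⁻¹(∂_λΨ)` satisfies `D±F = Ψ⁻¹(β ∂_λU±)Ψ`, `D_{x±}F = Ψ⁻¹(β ∂_λV±)Ψ` and
`D_{θ±}F = Ψ⁻¹(β ∂_λW±)Ψ` (here `∂_λU±` is `∂_λ` applied to `U±`, which automatically
satisfies `∂_λ(U±Ψ) = (∂_λU±)Ψ + U±(∂_λΨ)` by the Leibniz rule, and similarly for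
`V±`, `W±`). -/
theorem stmt11 {A : Type*} [Ring A] [Algebra ℂ A]
    (𝒜 : ZMod 2 → Submodule ℂ A) [GradedAlgebra 𝒜]
    (DP DM TP TM XP XM : A →ₗ[ℂ] A)
    (hDP : IsOddDerivation 𝒜 DP) (hDM : IsOddDerivation 𝒜 DM)
    (hTP : IsOddDerivation 𝒜 TP) (hTM : IsOddDerivation 𝒜 TM)
    (hXP : IsEvenDerivation 𝒜 XP) (hXM : IsEvenDerivation 𝒜 XM)
    (UP UM WP WM : A) (hUP : UP ∈ 𝒜 1) (hUM : UM ∈ 𝒜 1)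
    (hWP : WP ∈ 𝒜 1) (hWM : WM ∈ 𝒜 1)
    (VP VM : A) (hVP : VP ∈ 𝒜 0) (hVM : VM ∈ 𝒜 0)
    (dl : A →ₗ[ℂ] A) (hdl : IsEvenDerivation 𝒜 dl)
    (hdlDP : ∀ a, dl (DP a) = DP (dl a)) (hdlDM : ∀ a, dl (DM a) = DM (dl a))
    (hdlXP : ∀ a, dl (XP a) = XP (dl a)) (hdlXM : ∀ a, dl (XM a) = XM (dl a))
    (hdlTP : ∀ a, dl (TP a) = TP (dl a)) (hdlTM : ∀ a, dl (TM a) = TM (dl a))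
    (β : A) (hβ0 : β ∈ 𝒜 0) (hβc : ∀ a : A, β * a = a * β)
    (hβD : DP β = 0 ∧ DM β = 0 ∧ XP β = 0 ∧ XM β = 0 ∧ TP β = 0 ∧ TM β = 0)
    (Ψ Ψi : A) (hΨ0 : Ψ ∈ 𝒜 0) (hΨΨi : Ψ * Ψi = 1) (hΨiΨ : Ψi * Ψ = 1)
    (hΨDP : DP Ψ = UP * Ψ) (hΨDM : DM Ψ = UM * Ψ)
    (hΨXP : XP Ψ = VP * Ψ) (hΨXM : XM Ψ = VM * Ψ)
    (hΨTP : TP Ψ = WP * Ψ) (hΨTM : TM Ψ = WM * Ψ)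
    (F : A) (hF : F = β * (Ψi * dl Ψ)) :
    DP F = Ψi * (β * dl UP) * Ψ ∧
    DM F = Ψi * (β * dl UM) * Ψ ∧
    XP F = Ψi * (β * dl VP) * Ψ ∧
    XM F = Ψi * (β * dl VM) * Ψ ∧
    TP F = Ψi * (β * dl WP) * Ψ ∧
    TM F = Ψi * (β * dl WM) * Ψ := by
  obtain ⟨hβDP, hβDM, hβXP, hβXM, hβTP, hβTM⟩ := hβD
  have hΨi0 : Ψi ∈ 𝒜 0 := aux_inv_mem_zero 𝒜 hΨ0 hΨΨi hΨiΨ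
  subst hF
  exact ⟨aux_odd_F 𝒜 dl DP β Ψ Ψi UP hDP hβ0 hβc hβDP hΨi0 hΨΨi hΨiΨ hdl.2 (hdlDP Ψ) hΨDP,
    aux_odd_F 𝒜 dl DM β Ψ Ψi UM hDM hβ0 hβc hβDM hΨi0 hΨΨi hΨiΨ hdl.2 (hdlDM Ψ) hΨDM,
    aux_even_F 𝒜 dl XP β Ψ Ψi VP hXP hβc hβXP hΨΨi hΨiΨ hdl.2 (hdlXP Ψ) hΨXP,
    aux_even_F 𝒜 dl XM β Ψ Ψi VM hXM hβc hβXM hΨΨi hΨiΨ hdl.2 (hdlXM Ψ) hΨXM,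
    aux_odd_F 𝒜 dl TP β Ψ Ψi WP hTP hβ0 hβc hβTP hΨi0 hΨΨi hΨiΨ hdl.2 (hdlTP Ψ) hΨTP,
    aux_odd_F 𝒜 dl TM β Ψ Ψi WM hTM hβ0 hβc hβTM hΨi0 hΨΨi hΨiΨ hdl.2 (hdlTM Ψ) hΨTM⟩
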